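/- arXiv:1811.05124 — 2 statements merged into one kernel-verified Lean document; each statement's English description precedes it below -/
import Mathlib

section
/- Under the AGG(ν) tail condition (ν > 0), the sequence c_p := u_{p log p}/u_p − 1 converges to 0 as p → ∞, where u_q := F⁻¹(1 − 1/q). -/
open Filter Real

/-- The generalized (left-continuous) inverse of a CDF: F⁻¹(u) = inf {x : F(x) ≥ u}. -/
noncomputable def genInv (F : ℝ → ℝ) (u : ℝ) : ℝ := sInf {x : ℝ | u ≤ F x}

/-- The (1 − 1/q)-quantile of F. -/
noncomputable def quantileSeq (F : ℝ → ℝ) (q : ℝ) : ℝ := genInv F (1 - 1 / q)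

/-- The AGG(ν) tail condition: log F̄(x) ~ −x^ν/ν as x → ∞. -/
def AGGTail (F : ℝ → ℝ) (ν : ℝ) : Prop :=
  ∀ ε > (0:ℝ), ∃ C : ℝ, ∀ x ≥ C,
    -(1 + ε) * x ^ ν / ν ≤ Real.log (1 - F x) ∧
    Real.log (1 - F x) ≤ -(1 - ε) * x ^ ν / ν

/-!
The AGG bounds `exp (-(1 + ε) x^ν/ν) ≤ 1 - F x ≤ exp (-(1 - ε) x^ν/ν)`, read at the level
`1 - F x = 1/q`, trap the quantile: `log q / (1 + 2ε) ≤ u_q^ν/ν ≤ log q / (1 - ε)` for large `q`.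
Letting `ε → 0` gives `u_q^ν/ν ~ log q`, hence
`(u_{p log p} / u_p)^ν ~ log (p log p) / log p = 1 + log (log p) / log p → 1`.
-/

open Topology

theorem genInv_mem_Icc {F : ℝ → ℝ} (hmono : Monotone F) {a b u : ℝ} (ha : F a < u)
    (hb : u ≤ F b) : genInv F u ∈ Set.Icc a b := by
  have hlower : a ∈ lowerBounds {x | u ≤ F x} := fun _ hx =>
    (hmono.reflect_lt (ha.trans_le hx)).le
  exact ⟨le_csInf ⟨b, hb⟩ hlower, csInf_le ⟨a, hlower⟩ hb⟩

theorem tendsto_of_eventually_Icc {α β ι : Type*} [TopologicalSpace α] [LinearOrder α]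
    [OrderTopology α] {f : β → α} {l : Filter β} {l' : Filter ι} [l'.NeBot] {lo hi : ι → α}
    {c : α} (hlo : Tendsto lo l' (𝓝 c)) (hhi : Tendsto hi l' (𝓝 c))
    (h : ∀ᶠ i in l', ∀ᶠ x in l, f x ∈ Set.Icc (lo i) (hi i)) : Tendsto f l (𝓝 c) := by
  refine tendsto_order.2 ⟨fun a ha => ?_, fun b hb => ?_⟩
  · obtain ⟨i, hai, hi⟩ := ((hlo.eventually (lt_mem_nhds ha)).and h).exists
    exact hi.mono fun _ hx => hai.trans_le hx.1
  · obtain ⟨i, hib, hi⟩ := ((hhi.eventually (gt_mem_nhds hb)).and h).exists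
    exact hi.mono fun _ hx => hx.2.trans_lt hib

theorem mul_rpow_inv_rpow_div {ν t : ℝ} (hν : 0 < ν) (ht : 0 ≤ t) :
    ((ν * t) ^ ν⁻¹) ^ ν / ν = t := by
  rw [rpow_inv_rpow (by positivity) hν.ne', mul_div_cancel_left₀ _ hν.ne']

theorem tendsto_rpow_inv_mul_log_div_atTop {ν c : ℝ} (hν : 0 < ν) (hc : 0 < c) :
    Tendsto (fun q => (ν * (log q / c)) ^ ν⁻¹) atTop atTop :=
  (tendsto_rpow_atTop (inv_pos.2 hν)).comp
    ((tendsto_log_atTop.atTop_div_const hc).const_mul_atTop hν)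

theorem tendsto_log_mul_log_div_log :
    Tendsto (fun x => log (x * log x) / log x) atTop (𝓝 1) := by
  have h : Tendsto (fun x => 1 + log (log x) / log x) atTop (𝓝 1) := by
    simpa using (isLittleO_log_id_atTop.tendsto_div_nhds_zero.comp tendsto_log_atTop).const_add 1
  refine h.congr' ?_
  filter_upwards [eventually_gt_atTop 0, tendsto_log_atTop.eventually_gt_atTop 0] with x hx hlog
  rw [log_mul hx.ne' hlog.ne', add_div, div_self hlog.ne']

theorem tendsto_div_of_tendsto_rpow_div_log {α : Type*} {l : Filter α} {u : ℝ → ℝ} {ν : ℝ}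
    (hν : ν ≠ 0) (hu : Tendsto (fun q => u q ^ ν / ν / log q) atTop (𝓝 1))
    (hpos : ∀ᶠ q in atTop, 0 < u q) {x y : α → ℝ} (hx : Tendsto x l atTop)
    (hy : Tendsto y l atTop) (hxy : Tendsto (fun i => log (x i) / log (y i)) l (𝓝 1)) :
    Tendsto (fun i => u (x i) / u (y i)) l (𝓝 1) := by
  have hlog := tendsto_log_atTop.eventually_gt_atTop 0
  have hpow : Tendsto (fun i => (u (x i) / u (y i)) ^ ν) l (𝓝 1) := by
    have h := ((hu.comp hx).div (hu.comp hy) one_ne_zero).mul hxy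
    rw [div_one, one_mul] at h
    refine h.congr' ?_
    filter_upwards [hx.eventually hpos, hy.eventually hpos, hx.eventually hlog,
      hy.eventually hlog] with i hux huy hlx hly
    have : u (y i) ^ ν ≠ 0 := (rpow_pos_of_pos huy ν).ne'
    simp only [Pi.div_apply, Function.comp_apply]
    rw [div_rpow hux.le huy.le]
    field_simp
  have h := hpow.rpow_const (p := ν⁻¹) (Or.inl one_ne_zero)
  rw [one_rpow] at h
  refine h.congr' ?_
  filter_upwards [hx.eventually hpos, hy.eventually hpos] with i hux huy
  exact rpow_rpow_inv (div_pos hux huy).le hν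

namespace AGGTail

variable {F : ℝ → ℝ} {ν ε : ℝ}

theorem eventually_one_sub_mem_Icc (hAGG : AGGTail F ν) (hF1 : ∀ x, F x ≤ 1) (hν : 0 < ν)
    (hε : 0 < ε) (hε1 : ε < 1) :
    ∀ᶠ x in atTop,
      1 - F x ∈ Set.Icc (exp (-(1 + ε) * (x ^ ν / ν))) (exp (-(1 - ε) * (x ^ ν / ν))) := by
  obtain ⟨C, hC⟩ := hAGG ε hε
  filter_upwards [eventually_ge_atTop C, eventually_gt_atTop 0] with x hxC hx
  obtain ⟨hlo, hhi⟩ := hC x hxC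
  rw [mul_div_assoc] at hlo hhi
  -- `log 0 = 0`, so the upper AGG bound is what rules out `F x = 1`.
  have hpos : 0 < 1 - F x := by
    refine (sub_nonneg.2 (hF1 x)).lt_of_ne fun h => ?_
    rw [← h, log_zero, neg_mul] at hhi
    have : 0 < (1 - ε) * (x ^ ν / ν) := by
      have := sub_pos.2 hε1
      positivity
    linarith
  exact ⟨(exp_le_exp.2 hlo).trans_eq (exp_log hpos), (le_exp_log _).trans (exp_le_exp.2 hhi)⟩

-- `1 + 2ε` rather than `1 + ε`: `genInv_mem_Icc` needs a strict inequality at the lower end.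
theorem eventually_quantileSeq_mem_Icc (hAGG : AGGTail F ν) (hmono : Monotone F)
    (hF1 : ∀ x, F x ≤ 1) (hν : 0 < ν) (hε : 0 < ε) (hε1 : ε < 1) :
    ∀ᶠ q in atTop, quantileSeq F q ∈
      Set.Icc ((ν * (log q / (1 + 2 * ε))) ^ ν⁻¹) ((ν * (log q / (1 - ε))) ^ ν⁻¹) := by
  have hε2 : 0 < 1 + 2 * ε := by linarith
  have hε1' : 0 < 1 - ε := sub_pos.2 hε1
  have htail := hAGG.eventually_one_sub_mem_Icc hF1 hν hε hε1
  filter_upwards [(tendsto_rpow_inv_mul_log_div_atTop hν hε2).eventually htail,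
    (tendsto_rpow_inv_mul_log_div_atTop hν hε1').eventually htail,
    tendsto_log_atTop.eventually_gt_atTop 0, eventually_gt_atTop 0] with q hlo hhi hlog hq
  rw [mul_rpow_inv_rpow_div hν (by positivity)] at hlo hhi
  have hinv : exp (-log q) = 1 / q := by rw [exp_neg, exp_log hq, one_div]
  apply genInv_mem_Icc hmono
  · have hexp : -log q < -(1 + ε) * (log q / (1 + 2 * ε)) := by
      have : (1 + ε) * (log q / (1 + 2 * ε)) < log q := by
        rw [← mul_div_assoc, div_lt_iff₀ hε2]
        nlinarith
      linarith
    have := (exp_lt_exp.2 hexp).trans_le hlo.1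
    linarith
  · have := hhi.2
    rw [neg_mul, mul_div_cancel₀ _ hε1'.ne', hinv] at this
    linarith

theorem tendsto_quantileSeq_atTop (hAGG : AGGTail F ν) (hmono : Monotone F)
    (hF1 : ∀ x, F x ≤ 1) (hν : 0 < ν) : Tendsto (quantileSeq F) atTop atTop :=
  tendsto_atTop_mono' _
    ((hAGG.eventually_quantileSeq_mem_Icc hmono hF1 hν one_half_pos one_half_lt_one).mono
      fun _ hq => hq.1)
    (tendsto_rpow_inv_mul_log_div_atTop hν (by norm_num))

theorem tendsto_quantileSeq_rpow_div_log (hAGG : AGGTail F ν) (hmono : Monotone F)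
    (hF1 : ∀ x, F x ≤ 1) (hν : 0 < ν) :
    Tendsto (fun q => quantileSeq F q ^ ν / ν / log q) atTop (𝓝 1) := by
  have hlo : ContinuousAt (fun ε : ℝ => (1 + 2 * ε)⁻¹) 0 := by fun_prop (disch := norm_num)
  have hhi : ContinuousAt (fun ε : ℝ => (1 - ε)⁻¹) 0 := by fun_prop (disch := norm_num)
  refine tendsto_of_eventually_Icc (l' := 𝓝[>] (0 : ℝ))
    (by simpa using hlo.tendsto.mono_left nhdsWithin_le_nhds)
    (by simpa using hhi.tendsto.mono_left nhdsWithin_le_nhds) ?_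
  filter_upwards [Ioo_mem_nhdsGT one_pos] with ε ⟨hε, hε1⟩
  filter_upwards [hAGG.eventually_quantileSeq_mem_Icc hmono hF1 hν hε hε1,
    tendsto_log_atTop.eventually_gt_atTop 0] with q ⟨hqa, hqb⟩ hlog
  have hbound : ∀ c > 0, ((ν * (log q / c)) ^ ν⁻¹) ^ ν / ν / log q = c⁻¹ := fun c hc => by
    rw [mul_rpow_inv_rpow_div hν (by positivity), div_div_cancel_left' hlog.ne']
  have hε1' : 0 < 1 - ε := sub_pos.2 hε1
  rw [← hbound (1 + 2 * ε) (by positivity), ← hbound (1 - ε) hε1']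
  have hu : 0 ≤ quantileSeq F q := (rpow_nonneg (by positivity) _).trans hqa
  exact ⟨by gcongr, by gcongr⟩

end AGGTail

theorem AGG_cp_tendsto_zero_general (F : ℝ → ℝ) (hmono : Monotone F)
    (h1 : Tendsto F atTop (nhds 1))
    (ν : ℝ) (hν : 0 < ν) (hAGG : AGGTail F ν) :
    Tendsto (fun p : ℕ =>
        quantileSeq F (p * Real.log p) / quantileSeq F p - 1) atTop (nhds 0) := by
  have hF1 : ∀ x, F x ≤ 1 := hmono.ge_of_tendsto h1
  have hp : Tendsto (fun p : ℕ => (p : ℝ)) atTop atTop := tendsto_natCast_atTop_atTop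
  have hratio := tendsto_div_of_tendsto_rpow_div_log hν.ne'
    (hAGG.tendsto_quantileSeq_rpow_div_log hmono hF1 hν)
    ((hAGG.tendsto_quantileSeq_atTop hmono hF1 hν).eventually_gt_atTop 0)
    ((tendsto_id.atTop_mul_atTop₀ tendsto_log_atTop).comp hp) hp
    (tendsto_log_mul_log_div_log.comp hp)
  simpa using hratio.sub_const 1

theorem AGG_cp_tendsto_zero (F : ℝ → ℝ) (hmono : Monotone F)
    (hrc : ∀ x : ℝ, ContinuousWithinAt F (Set.Ici x) x)
    (h0 : Tendsto F atBot (nhds 0)) (h1 : Tendsto F atTop (nhds 1))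
    (ν : ℝ) (hν : 0 < ν) (hAGG : AGGTail F ν) :
    Tendsto (fun p : ℕ =>
        quantileSeq F (p * Real.log p) / quantileSeq F p - 1) atTop (nhds 0) :=
  AGG_cp_tendsto_zero_general F hmono h1 ν hν hAGG
end

section
/- Let ε_p(1), …, ε_p(p) have common marginal F satisfying the AGG(ν) tail condition for some ν > 0, with arbitrary dependence, and set ξ_p := M_p / u_{p log p} where M_p is the maximum. Then there exist p₀, t₀ > 0 and an absolute constant C > 0 such that P[ξ_p > t] ≤ exp(−C t^ν) for all p > p₀ and t > t₀. Consequently, the family {(ξ_p)₊ : p ∈ ℕ} is uniformly integrable. -/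
open Filter MeasureTheory
open scoped ENNReal

lemma sum_aux {C ν : ℝ} (hC : 0 < C) (hν : 0 < ν) :
    Summable (fun n : ℕ => ((n:ℝ)+1) * Real.exp (-C * (n:ℝ)^ν)) := by
  have hcomp : Tendsto (fun x : ℝ => (x ^ ν) ^ (3/ν) * Real.exp (-C * x ^ ν)) atTop (nhds 0) :=
    (tendsto_rpow_mul_exp_neg_mul_atTop_nhds_zero _ _ hC).comp (tendsto_rpow_atTop hν)
  have key : Tendsto (fun n : ℕ => (n:ℝ)^2 * (((n:ℝ)+1) * Real.exp (-C * (n:ℝ)^ν))) atTop (nhds 0) := by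
    have hnat : Tendsto (fun n : ℕ => (n:ℝ)) atTop atTop := tendsto_natCast_atTop_atTop
    apply squeeze_zero' (g := fun n : ℕ => 2 * (((n:ℝ) ^ ν) ^ (3/ν) * Real.exp (-C * (n:ℝ)^ν)))
    · filter_upwards [] with n; positivity
    · filter_upwards [eventually_ge_atTop 1] with n hn
      have hn1 : (1:ℝ) ≤ (n:ℝ) := by exact_mod_cast hn
      have hrw : ((n:ℝ) ^ ν) ^ (3/ν) = (n:ℝ)^(3:ℕ) := by
        rw [← Real.rpow_natCast (n:ℝ) 3, ← Real.rpow_mul (by positivity)]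
        norm_num
        rw [mul_div_cancel₀ _ (ne_of_gt hν)]
        exact_mod_cast Real.rpow_natCast (n:ℝ) 3
      rw [hrw]
      have h2 : (n:ℝ)^2 * ((n:ℝ)+1) ≤ 2 * (n:ℝ)^(3:ℕ) := by nlinarith
      have he : (0:ℝ) < Real.exp (-C * (n:ℝ)^ν) := Real.exp_pos _
      nlinarith
    · have := (hcomp.comp hnat).const_mul 2
      simpa using this
  -- BigO argument
  have hO : (fun n : ℕ => ((n:ℝ)+1) * Real.exp (-C * (n:ℝ)^ν)) =O[atTop] (fun n : ℕ => 1/(n:ℝ)^2) := by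
    have h1 : (fun n : ℕ => (n:ℝ)^2 * (((n:ℝ)+1) * Real.exp (-C * (n:ℝ)^ν))) =O[atTop] (fun _ : ℕ => (1:ℝ)) :=
      key.isBigO_one ℝ
    have h2 := h1.mul (Asymptotics.isBigO_refl (fun n : ℕ => 1/(n:ℝ)^2) atTop)
    refine h2.congr' ?_ (by simp) |>.trans (Asymptotics.isBigO_refl _ _)
    filter_upwards [eventually_ge_atTop 1] with n hn
    have hn0 : ((n:ℝ))^2 ≠ 0 := by positivity
    field_simp
  exact summable_of_isBigO_nat (by simpa using Real.summable_one_div_nat_pow.mpr one_lt_two) hO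
section core
variable (F : ℝ → ℝ) (hmono : Monotone F)
  (h0 : Tendsto F atBot (nhds 0)) (h1 : Tendsto F atTop (nhds 1))
  (ν : ℝ) (hν : 0 < ν) (hAGG : AGGTail F ν)

include hmono h1 in
lemma F_le_one : ∀ x, F x ≤ 1 := fun x =>
  ge_of_tendsto h1 (eventually_atTop.2 ⟨x, fun y hy => hmono hy⟩)

include hmono h0 in
lemma F_nonneg : ∀ x, 0 ≤ F x := fun x =>
  le_of_tendsto h0 (eventually_atBot.2 ⟨x, fun y hy => hmono hy⟩)

-- main analytic core
include hmono h0 h1 hν hAGG in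
lemma core :
    ∃ C₁ : ℝ, 1 ≤ C₁ ∧
      (∀ x, F x < 1) ∧
      (∀ x ≥ C₁, 1 - F x ≤ Real.exp (-(1/2) * x ^ ν / ν)) ∧
      (∀ q : ℝ, 1 < q → ((ν/2) * Real.log q) ^ (1/ν) ≥ C₁ →
        quantileSeq F q ≥ ((ν/2) * Real.log q) ^ (1/ν)) := by
  obtain ⟨C₀, hC₀⟩ := hAGG (1/2) (by norm_num)
  set C₁ := max C₀ 1 with hC₁def
  have hC₁1 : (1:ℝ) ≤ C₁ := le_max_right _ _
  have hFlt : ∀ x ≥ C₁, F x < 1 := by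
    intro x hx
    by_contra h
    push_neg at h
    have hx1 : (1:ℝ) ≤ x := le_trans hC₁1 hx
    have heq : 1 - F x = 0 := by
      have := F_le_one F hmono h1 x; linarith
    have hb := (hC₀ x (le_trans (le_max_left _ _) hx)).2
    rw [heq, Real.log_zero] at hb
    have hxν : (1:ℝ) ≤ x ^ ν := Real.one_le_rpow hx1 (le_of_lt hν)
    have : -(1 - 1/2) * x ^ ν / ν < 0 := by
      apply div_neg_of_neg_of_pos _ hν; nlinarith
    linarith
  have hFltAll : ∀ x, F x < 1 := by
    intro x
    rcases le_total x C₁ with h | h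
    · exact lt_of_le_of_lt (hmono h) (hFlt C₁ le_rfl)
    · exact hFlt x h
  refine ⟨C₁, hC₁1, hFltAll, ?_, ?_⟩
  · intro x hx
    have hpos : 0 < 1 - F x := by linarith [hFltAll x]
    have hb := (hC₀ x (le_trans (le_max_left _ _) hx)).2
    have : 1 - F x = Real.exp (Real.log (1 - F x)) := (Real.exp_log hpos).symm
    rw [this]
    apply Real.exp_le_exp.2
    calc Real.log (1 - F x) ≤ -(1 - 1/2) * x ^ ν / ν := hb
      _ = -(1/2) * x ^ ν / ν := by norm_num
  · intro q hq hL
    set L := ((ν/2) * Real.log q) ^ (1/ν) with hLdef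
    have hlogq : 0 < Real.log q := Real.log_pos hq
    have hLν : L ^ ν = (ν/2) * Real.log q := by
      rw [hLdef, one_div]
      exact Real.rpow_inv_rpow (by positivity) (ne_of_gt hν)
    have hFL : F L < 1 - 1/q := by
      have hpos : 0 < 1 - F L := by linarith [hFltAll L]
      have hb := (hC₀ L (le_trans (le_max_left _ _) hL)).1
      have hlog : Real.log (1 - F L) ≥ -(3/4) * Real.log q := by
        rw [hLν] at hb
        calc Real.log (1 - F L) ≥ -(1 + 1/2) * ((ν/2) * Real.log q) / ν := hb
          _ = -(3/4) * Real.log q := by field_simp; ring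
      have h1q : 1 - F L ≥ Real.exp (-(3/4) * Real.log q) := by
        calc 1 - F L = Real.exp (Real.log (1 - F L)) := (Real.exp_log hpos).symm
          _ ≥ Real.exp (-(3/4) * Real.log q) := Real.exp_le_exp.2 hlog
      have hgt : Real.exp (-(3/4) * Real.log q) > 1/q := by
        have : (1:ℝ)/q = Real.exp (-Real.log q) := by
          rw [Real.exp_neg, Real.exp_log (by linarith)]; ring
        rw [this]
        apply Real.exp_lt_exp.2
        nlinarith
      linarith
    have hne : {x : ℝ | 1 - 1/q ≤ F x}.Nonempty := by
      have h1q : 1 - 1/q < 1 := by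
        have : 0 < 1/q := by positivity
        linarith
      obtain ⟨x, hx⟩ := (h1.eventually (eventually_gt_nhds h1q)).exists
      exact ⟨x, le_of_lt hx⟩
    apply le_csInf hne
    intro x hx
    by_contra h
    push_neg at h
    have : F x ≤ F L := hmono (le_of_lt h)
    have : (1:ℝ) - 1/q ≤ F L := le_trans hx this
    linarith
end core

section prob
variable {Ω : Type} [MeasurableSpace Ω] (μ : Measure Ω) [IsProbabilityMeasure μ]

-- union bound
lemma union_bound (F : ℝ → ℝ) (hF0 : ∀ x, 0 ≤ F x) {p : ℕ} (hp : 0 < p)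
    (ε : Fin p → Ω → ℝ) (hmeas : ∀ j, Measurable (ε j))
    (hmarg : ∀ j (x : ℝ), μ {ω | ε j ω ≤ x} = ENNReal.ofReal (F x)) (a : ℝ) :
    μ {ω | a < ⨆ j, ε j ω} ≤ (p : ℝ≥0∞) * ENNReal.ofReal (1 - F a) := by
  have : Nonempty (Fin p) := Fin.pos_iff_nonempty.1 hp
  have hsub : {ω | a < ⨆ j, ε j ω} ⊆ ⋃ j, {ω | a < ε j ω} := by
    intro ω hω
    simp only [Set.mem_setOf_eq] at hω
    obtain ⟨j, hj⟩ := exists_lt_of_lt_ciSup hω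
    exact Set.mem_iUnion.2 ⟨j, hj⟩
  calc μ {ω | a < ⨆ j, ε j ω} ≤ μ (⋃ j, {ω | a < ε j ω}) := measure_mono hsub
    _ ≤ ∑' j : Fin p, μ {ω | a < ε j ω} := measure_iUnion_le _
    _ = ∑' j : Fin p, ENNReal.ofReal (1 - F a) := by
        congr 1; funext j
        have hset : {ω | a < ε j ω} = {ω | ε j ω ≤ a}ᶜ := by
          ext ω; simp [not_le]
        rw [hset, measure_compl (measurableSet_le (hmeas j) measurable_const) (measure_ne_top _ _),
          hmarg j a, measure_univ, ← ENNReal.ofReal_one, ← ENNReal.ofReal_sub _ (hF0 a)]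
    _ = (p : ℝ≥0∞) * ENNReal.ofReal (1 - F a) := by
        rw [tsum_fintype]; simp [Finset.card_univ, mul_comm]
end prob
section part1
variable (F : ℝ → ℝ) (hmono : Monotone F)
  (h0 : Tendsto F atBot (nhds 0)) (h1 : Tendsto F atTop (nhds 1))
  (ν : ℝ) (hν : 0 < ν) (hAGG : AGGTail F ν)
  (Ω : ℕ → Type) (mΩ : ∀ p, MeasurableSpace (Ω p))
  (μ : ∀ p, Measure (Ω p)) (hprob : ∀ p, IsProbabilityMeasure (μ p))
  (ε : ∀ p : ℕ, Fin p → Ω p → ℝ)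
  (hmeas : ∀ p j, Measurable (ε p j))
  (hmarg : ∀ p j (x : ℝ), μ p {ω | ε p j ω ≤ x} = ENNReal.ofReal (F x))

include hmono h0 h1 hν hAGG hprob hmeas hmarg in
lemma part1 :
    ∃ p₀ t₀ : ℝ, 0 < p₀ ∧ 0 < t₀ ∧ ∃ C : ℝ, 0 < C ∧
      ∀ p : ℕ, p₀ < p → ∀ t : ℝ, t₀ < t →
        μ p {ω | t < (⨆ j, ε p j ω) / quantileSeq F (p * Real.log p)}
          ≤ ENNReal.ofReal (Real.exp (-C * t ^ ν)) := by
  obtain ⟨C₁, hC₁1, hFlt, htail, hquant⟩ := core F hmono h0 h1 ν hν hAGG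
  refine ⟨max 3 (Real.exp (2 * C₁ ^ ν / ν)), max 1 ((8:ℝ) ^ (1/ν)), by positivity, ?_, 1/8, by norm_num, ?_⟩
  · have : (0:ℝ) < max 1 ((8:ℝ)^(1/ν)) := lt_of_lt_of_le one_pos (le_max_left _ _)
    exact this
  intro p hp t ht
  haveI := hprob p
  -- basic facts about p
  have hp3 : (3:ℝ) ≤ (p:ℝ) := le_of_lt (lt_of_le_of_lt (le_max_left _ _) hp)
  have hppos : (0:ℝ) < p := by linarith
  have hlogp : 1 ≤ Real.log p := by
    rw [Real.le_log_iff_exp_le hppos]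
    calc Real.exp 1 ≤ 2.7182818286 := le_of_lt Real.exp_one_lt_d9
      _ ≤ 3 := by norm_num
      _ ≤ p := hp3
  have hlogp' : 2 * C₁ ^ ν / ν ≤ Real.log p := by
    have hexp : Real.exp (2 * C₁ ^ ν / ν) ≤ (p:ℝ) :=
      le_of_lt (lt_of_le_of_lt (le_max_right _ _) hp)
    calc 2 * C₁ ^ ν / ν = Real.log (Real.exp (2 * C₁ ^ ν / ν)) := (Real.log_exp _).symm
      _ ≤ Real.log p := Real.log_le_log (Real.exp_pos _) hexp
  set q := (p:ℝ) * Real.log p with hqdef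
  have hqp : (p:ℝ) ≤ q := le_mul_of_one_le_right (le_of_lt hppos) hlogp
  have hq1 : 1 < q := by linarith
  have hlogq : Real.log p ≤ Real.log q := Real.log_le_log hppos hqp
  -- the quantile bound
  set L := ((ν/2) * Real.log q) ^ (1/ν) with hLdef
  have hlogq1 : (1:ℝ) ≤ Real.log q := le_trans hlogp hlogq
  have hLC₁ : L ≥ C₁ := by
    have hC₁pos : (0:ℝ) < C₁ := lt_of_lt_of_le one_pos hC₁1
    have h1 : C₁ ^ ν ≤ (ν/2) * Real.log q := by
      have : 2 * C₁ ^ ν / ν ≤ Real.log q := le_trans hlogp' hlogq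
      calc C₁ ^ ν = (ν/2) * (2 * C₁ ^ ν / ν) := by field_simp
        _ ≤ (ν/2) * Real.log q := by
            apply mul_le_mul_of_nonneg_left this (by positivity)
    calc L = ((ν/2) * Real.log q) ^ (1/ν) := rfl
      _ ≥ (C₁ ^ ν) ^ (1/ν) := by
          apply Real.rpow_le_rpow (by positivity) h1 (by positivity)
      _ = C₁ := by rw [one_div]; exact Real.rpow_rpow_inv (le_of_lt hC₁pos) (ne_of_gt hν)
  have hu : quantileSeq F q ≥ L := hquant q hq1 hLC₁
  have hLpos : 0 < L := Real.rpow_pos_of_pos (by positivity) _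
  have hupos : 0 < quantileSeq F q := lt_of_lt_of_le hLpos hu
  set u := quantileSeq F q with hudef
  -- t basics
  have ht1 : (1:ℝ) ≤ t := le_of_lt (lt_of_le_of_lt (le_max_left _ _) ht)
  have ht8 : (8:ℝ) ≤ t ^ ν := by
    have h8 : (8:ℝ)^(1/ν) < t := lt_of_le_of_lt (le_max_right _ _) ht
    have : ((8:ℝ)^(1/ν)) ^ ν ≤ t ^ ν :=
      Real.rpow_le_rpow (by positivity) (le_of_lt h8) (le_of_lt hν)
    rwa [one_div, Real.rpow_inv_rpow (by norm_num) (ne_of_gt hν)] at this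
  -- event rewriting
  have hev : {ω | t < (⨆ j, ε p j ω) / u} = {ω | t * u < ⨆ j, ε p j ω} := by
    ext ω; simp only [Set.mem_setOf_eq, lt_div_iff₀ hupos]
  have hppos' : 0 < p := by exact_mod_cast hppos
  have hub := union_bound (μ p) F (F_nonneg F hmono h0) hppos' (ε p) (hmeas p) (hmarg p) (t * u)
  -- tail estimate at t*u
  have htuC₁ : t * u ≥ C₁ := by nlinarith
  have htail2 : 1 - F (t * u) ≤ Real.exp (-(1/2) * (t*u) ^ ν / ν) := htail _ htuC₁
  -- the analytic chain
  have hLν : L ^ ν = (ν/2) * Real.log q := by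
    rw [hLdef, one_div]; exact Real.rpow_inv_rpow (by positivity) (ne_of_gt hν)
  have htu : (t*u)^ν = t^ν * u^ν := Real.mul_rpow (by linarith) (le_of_lt hupos)
  have huν : u ^ ν ≥ (ν/2) * Real.log q := by
    rw [← hLν]
    exact Real.rpow_le_rpow (le_of_lt hLpos) hu (le_of_lt hν)
  have htν_pos : 0 < t ^ ν := by linarith
  have hchain : (p:ℝ) * Real.exp (-(1/2) * (t*u) ^ ν / ν) ≤ Real.exp (-(1/8) * t ^ ν) := by
    have h1 : -(1/2) * (t*u)^ν / ν ≤ -(t^ν * Real.log q / 4) := by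
      rw [htu]
      have : t^ν * u^ν ≥ t^ν * ((ν/2) * Real.log q) :=
        mul_le_mul_of_nonneg_left huν (le_of_lt htν_pos)
      have hνne : ν ≠ 0 := ne_of_gt hν
      rw [div_le_iff₀ hν]  -- might not apply due to sign; fallback
      nlinarith
    have h2 : (p:ℝ) = Real.exp (Real.log p) := (Real.exp_log hppos).symm
    calc (p:ℝ) * Real.exp (-(1/2) * (t*u) ^ ν / ν)
        ≤ Real.exp (Real.log p) * Real.exp (-(t^ν * Real.log q / 4)) := by
          rw [← h2]
          exact mul_le_mul_of_nonneg_left (Real.exp_le_exp.2 h1) (le_of_lt hppos)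
      _ = Real.exp (Real.log p - t^ν * Real.log q / 4) := by rw [← Real.exp_add]; ring_nf
      _ ≤ Real.exp (-(1/8) * t ^ ν) := by
          apply Real.exp_le_exp.2
          have hlq : Real.log p ≤ Real.log q := hlogq
          nlinarith [mul_le_mul_of_nonneg_left hlogq (le_of_lt htν_pos)]
  calc μ p {ω | t < (⨆ j, ε p j ω) / u}
      ≤ (p : ℝ≥0∞) * ENNReal.ofReal (1 - F (t*u)) := by rw [hev]; exact hub
    _ ≤ (p : ℝ≥0∞) * ENNReal.ofReal (Real.exp (-(1/2) * (t*u) ^ ν / ν)) := by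
        exact mul_le_mul_right (ENNReal.ofReal_le_ofReal htail2) _
    _ = ENNReal.ofReal ((p:ℝ) * Real.exp (-(1/2) * (t*u) ^ ν / ν)) := by
        rw [ENNReal.ofReal_mul (le_of_lt hppos)]
        congr 1
        simp [ENNReal.ofReal_natCast]
    _ ≤ ENNReal.ofReal (Real.exp (-(1/8) * t ^ ν)) := ENNReal.ofReal_le_ofReal hchain
end part1

lemma conv_lemma {Ω : Type} [MeasurableSpace Ω] (μ : Measure Ω) (g : Ω → ℝ)
    (hg : Measurable g) (hg0 : ∀ ω, 0 ≤ g ω) (S : Set Ω) :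
    ∫ ω in S, g ω ∂μ = (∫⁻ ω in S, ENNReal.ofReal (g ω) ∂μ).toReal :=
  integral_eq_lintegral_of_nonneg_ae (ae_of_all _ hg0) hg.aestronglyMeasurable

lemma I_mono {Ω : Type} [MeasurableSpace Ω] (μ : Measure Ω) (g : Ω → ℝ) {K K' : ℝ}
    (h : K ≤ K') :
    ∫⁻ ω in {ω | K' < g ω}, ENNReal.ofReal (g ω) ∂μ ≤
      ∫⁻ ω in {ω | K < g ω}, ENNReal.ofReal (g ω) ∂μ :=
  lintegral_mono' (Measure.restrict_mono (fun ω hω => lt_of_le_of_lt h hω) le_rfl) le_rfl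

lemma helperA {Ω : Type} [MeasurableSpace Ω] (μ : Measure Ω) [IsProbabilityMeasure μ]
    (g : Ω → ℝ) (hg : Measurable g) (hg0 : ∀ ω, 0 ≤ g ω) (δ : ℝ) (hδ : 0 < δ) :
    ∃ K₀ : ℝ, ∀ K ≥ K₀, ∫ ω in {ω | K < g ω}, g ω ∂μ ≤ δ := by
  set I : ℝ → ℝ≥0∞ := fun K => ∫⁻ ω in {ω | K < g ω}, ENNReal.ofReal (g ω) ∂μ with hI
  by_cases hfin : ∀ n : ℕ, I n = ∞
  · refine ⟨0, fun K _ => ?_⟩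
    have hKn : I K = ∞ := by
      have h1 : I (⌈max K 0⌉₊ : ℕ) ≤ I K := I_mono μ g (le_trans (le_max_left _ _) (Nat.le_ceil _))
      rw [hfin _] at h1
      exact top_le_iff.1 h1
    rw [conv_lemma μ g hg hg0,
      show (∫⁻ ω in {ω | K < g ω}, ENNReal.ofReal (g ω) ∂μ) = ⊤ from hKn]
    simpa using le_of_lt hδ
  · push_neg at hfin
    obtain ⟨n₁, hn₁⟩ := hfin
    set bound : Ω → ℝ≥0∞ := fun ω => {ω | (n₁:ℝ) < g ω}.indicator (fun ω => ENNReal.ofReal (g ω)) ω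
    have hmS : ∀ c : ℝ, MeasurableSet {ω | c < g ω} := fun c => measurableSet_lt measurable_const hg
    have hDCT : Tendsto (fun k : ℕ => I ((n₁:ℝ) + k)) atTop (nhds 0) := by
      have hlin : ∀ k : ℕ, I ((n₁:ℝ) + k) =
          ∫⁻ ω, {ω | (n₁:ℝ) + k < g ω}.indicator (fun ω => ENNReal.ofReal (g ω)) ω ∂μ := by
        intro k; rw [lintegral_indicator (hmS _)]
      have h0' : (0:ℝ≥0∞) = ∫⁻ _ω, (0:ℝ≥0∞) ∂μ := by simp
      simp only [hlin]
      rw [show nhds (0:ℝ≥0∞) = nhds (∫⁻ _ω, (0:ℝ≥0∞) ∂μ) by rw [← h0']]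
      apply tendsto_lintegral_of_dominated_convergence bound
      · intro k
        exact (ENNReal.measurable_ofReal.comp hg).indicator (hmS _)
      · intro k
        apply ae_of_all
        intro ω
        apply Set.indicator_le_indicator_of_subset
        · intro ω' hω'
          have : (n₁:ℝ) ≤ (n₁:ℝ) + k := le_add_of_nonneg_right (by positivity)
          exact lt_of_le_of_lt this hω'
        · intro ω'; exact zero_le
      · have hb : ∫⁻ ω, bound ω ∂μ = I (n₁:ℝ) := lintegral_indicator (hmS _) _
        rw [hb]; exact hn₁
      · apply ae_of_all
        intro ω
        apply tendsto_nhds_of_eventually_eq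
        obtain ⟨k₀, hk₀⟩ := exists_nat_gt (g ω - n₁)
        filter_upwards [eventually_ge_atTop k₀] with k hk
        apply Set.indicator_of_notMem
        simp only [Set.mem_setOf_eq, not_lt]
        have : (k₀:ℝ) ≤ k := by exact_mod_cast hk
        linarith
    have hpos : (0:ℝ≥0∞) < ENNReal.ofReal δ := ENNReal.ofReal_pos.2 hδ
    obtain ⟨k₀, hk₀⟩ := (hDCT.eventually_lt_const hpos).exists
    refine ⟨(n₁:ℝ) + k₀, fun K hK => ?_⟩
    have h1 : I K ≤ I ((n₁:ℝ) + k₀) := I_mono μ g hK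
    have h2 : I K ≤ ENNReal.ofReal δ := le_trans h1 (le_of_lt hk₀)
    rw [conv_lemma μ g hg hg0]
    exact ENNReal.toReal_le_of_le_ofReal (le_of_lt hδ) h2

lemma helperB {Ω : Type} [MeasurableSpace Ω] (μ : Measure Ω) [IsProbabilityMeasure μ]
    (ξ : Ω → ℝ) (t₀ C ν : ℝ) (ht₀ : 0 < t₀) (hC : 0 < C) (hν : 0 < ν)
    (hbd : ∀ t : ℝ, t₀ < t → μ {ω | t < ξ ω} ≤ ENNReal.ofReal (Real.exp (-C * t ^ ν)))
    (hsum : Summable (fun n : ℕ => ((n:ℝ)+1) * Real.exp (-C * (n:ℝ)^ν)))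
    (N : ℕ) (hN : t₀ + 2 ≤ N) :
    ∫⁻ ω in {ω | (N:ℝ) < max (ξ ω) 0}, ENNReal.ofReal (max (ξ ω) 0) ∂μ
      ≤ ENNReal.ofReal (2 * ∑' k : ℕ,
          (((k + (N-1) : ℕ) : ℝ) + 1) * Real.exp (-C * ((k + (N-1) : ℕ) : ℝ) ^ ν)) := by
  set g : Ω → ℝ := fun ω => max (ξ ω) 0 with hgdef
  have hg0 : ∀ ω, 0 ≤ g ω := fun ω => le_max_right _ _
  have hN1 : 1 ≤ N := by
    have : (1:ℝ) ≤ N := by linarith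
    exact_mod_cast this
  have hcast : ∀ n : ℕ, ((n + (N-1) : ℕ) : ℝ) = (n:ℝ) + (N:ℝ) - 1 := by
    intro n
    have : ((N - 1 : ℕ) : ℝ) = (N:ℝ) - 1 := by
      rw [Nat.cast_sub hN1]; norm_num
    push_cast [this]; ring
  set S : ℕ → Set Ω := fun n => {ω | (N:ℝ) + n ≤ g ω ∧ g ω < (N:ℝ) + n + 1} with hSdef
  have hcover : {ω | (N:ℝ) < g ω} ⊆ ⋃ n, S n := by
    intro ω hω
    simp only [Set.mem_setOf_eq] at hω
    have hgnn := hg0 ω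
    set m := ⌊g ω⌋₊ with hmdef
    have hNm : N ≤ m := Nat.le_floor (le_of_lt hω)
    have hc : ((m - N : ℕ) : ℝ) = (m:ℝ) - N := by
      rw [Nat.cast_sub hNm]
    have h1 : (N:ℝ) + ((m - N : ℕ):ℝ) ≤ g ω := by
      rw [hc]; linarith [Nat.floor_le hgnn]
    have h2 : g ω < (N:ℝ) + ((m - N : ℕ):ℝ) + 1 := by
      rw [hc]; linarith [Nat.lt_floor_add_one (g ω)]
    exact Set.mem_iUnion.2 ⟨m - N, h1, h2⟩
  calc ∫⁻ ω in {ω | (N:ℝ) < g ω}, ENNReal.ofReal (g ω) ∂μ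
      ≤ ∫⁻ ω in ⋃ n, S n, ENNReal.ofReal (g ω) ∂μ :=
        lintegral_mono' (Measure.restrict_mono hcover le_rfl) le_rfl
    _ ≤ ∑' n : ℕ, ∫⁻ ω in S n, ENNReal.ofReal (g ω) ∂μ := lintegral_iUnion_le _ _
    _ ≤ ∑' n : ℕ, ENNReal.ofReal (2 * ((((n + (N-1) : ℕ)):ℝ) + 1) *
          Real.exp (-C * (((n + (N-1) : ℕ)):ℝ) ^ ν)) := by
        apply ENNReal.tsum_le_tsum
        intro n
        have hstep1 : ∫⁻ ω in S n, ENNReal.ofReal (g ω) ∂μ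
            ≤ ENNReal.ofReal ((N:ℝ) + n + 1) * μ (S n) := by
          rw [← setLIntegral_const]
          apply setLIntegral_mono measurable_const
          intro ω hω
          exact ENNReal.ofReal_le_ofReal (le_of_lt hω.2)
        have hstep2 : μ (S n) ≤ ENNReal.ofReal (Real.exp (-C * ((N:ℝ) + n - 1) ^ ν)) := by
          have hsub : S n ⊆ {ω | (N:ℝ) + n - 1 < ξ ω} := by
            intro ω hω
            have h1 : (N:ℝ) + n - 1 < g ω := by
              have := hω.1; linarith
            have hpos : (0:ℝ) < (N:ℝ) + n - 1 := by
              have : (2:ℝ) ≤ N := by linarith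
              have hn : (0:ℝ) ≤ n := Nat.cast_nonneg n
              linarith
            simp only [Set.mem_setOf_eq]
            have h1' : (N:ℝ) + n - 1 < ξ ω ⊔ 0 := h1
            rcases max_cases (ξ ω) 0 with ⟨he, _⟩ | ⟨he, _⟩
            · rwa [he] at h1'
            · rw [he] at h1'; linarith
          calc μ (S n) ≤ μ {ω | (N:ℝ) + n - 1 < ξ ω} := measure_mono hsub
            _ ≤ ENNReal.ofReal (Real.exp (-C * ((N:ℝ) + n - 1) ^ ν)) := by
                apply hbd
                have hn : (0:ℝ) ≤ n := Nat.cast_nonneg n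
                linarith
        calc ∫⁻ ω in S n, ENNReal.ofReal (g ω) ∂μ
            ≤ ENNReal.ofReal ((N:ℝ) + n + 1) * ENNReal.ofReal (Real.exp (-C * ((N:ℝ) + n - 1) ^ ν)) :=
              le_trans hstep1 (mul_le_mul_right hstep2 _)
          _ = ENNReal.ofReal (((N:ℝ) + n + 1) * Real.exp (-C * ((N:ℝ) + n - 1) ^ ν)) := by
              rw [← ENNReal.ofReal_mul (by positivity)]
          _ ≤ ENNReal.ofReal (2 * ((((n + (N-1) : ℕ)):ℝ) + 1) *
                Real.exp (-C * (((n + (N-1) : ℕ)):ℝ) ^ ν)) := by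
              apply ENNReal.ofReal_le_ofReal
              rw [hcast n]
              have he : (0:ℝ) < Real.exp (-C * ((n:ℝ) + (N:ℝ) - 1) ^ ν) := Real.exp_pos _
              have harith : (N:ℝ) + n + 1 ≤ 2 * (((n:ℝ) + (N:ℝ) - 1) + 1) := by
                have : (1:ℝ) ≤ N := by exact_mod_cast hN1
                have hn : (0:ℝ) ≤ n := Nat.cast_nonneg n
                linarith
              have hle : ((N:ℝ) + n - 1) = ((n:ℝ) + (N:ℝ) - 1) := by ring
              rw [hle]
              nlinarith
    _ = ENNReal.ofReal (∑' n : ℕ, 2 * ((((n + (N-1) : ℕ)):ℝ) + 1) *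
          Real.exp (-C * (((n + (N-1) : ℕ)):ℝ) ^ ν)) := by
        rw [ENNReal.ofReal_tsum_of_nonneg]
        · intro n; positivity
        · have hs : Summable (fun n : ℕ => (((n + (N-1) : ℕ) : ℝ)+1) * Real.exp (-C * ((n + (N-1):ℕ):ℝ)^ν)) := by
            exact_mod_cast (summable_nat_add_iff (N-1)).2 hsum
          simpa [mul_assoc] using hs.mul_left 2
    _ ≤ ENNReal.ofReal (2 * ∑' k : ℕ,
          (((k + (N-1) : ℕ) : ℝ) + 1) * Real.exp (-C * ((k + (N-1) : ℕ) : ℝ) ^ ν)) := by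
        apply ENNReal.ofReal_le_ofReal
        simp only [mul_assoc]
        rw [tsum_mul_left]

theorem AGG_max_uniform_integrability
    (F : ℝ → ℝ) (hmono : Monotone F)
    (hrc : ∀ x : ℝ, ContinuousWithinAt F (Set.Ici x) x)
    (h0 : Tendsto F atBot (nhds 0)) (h1 : Tendsto F atTop (nhds 1))
    (ν : ℝ) (hν : 0 < ν) (hAGG : AGGTail F ν)
    (Ω : ℕ → Type) (mΩ : ∀ p, MeasurableSpace (Ω p))
    (μ : ∀ p, Measure (Ω p)) (hprob : ∀ p, IsProbabilityMeasure (μ p))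
    (ε : ∀ p : ℕ, Fin p → Ω p → ℝ)
    (hmeas : ∀ p j, Measurable (ε p j))
    (hmarg : ∀ p j (x : ℝ), μ p {ω | ε p j ω ≤ x} = ENNReal.ofReal (F x)) :
    -- the normalized maximum ξ_p = M_p / u_{p log p}
    (∃ p₀ t₀ : ℝ, 0 < p₀ ∧ 0 < t₀ ∧ ∃ C : ℝ, 0 < C ∧
      ∀ p : ℕ, p₀ < p → ∀ t : ℝ, t₀ < t →
        μ p {ω | t < (⨆ j, ε p j ω) / quantileSeq F (p * Real.log p)}
          ≤ ENNReal.ofReal (Real.exp (-C * t ^ ν))) ∧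
    -- uniform integrability of the positive parts (ξ_p)₊ :
    -- sup_p E[(ξ_p)₊ 1{(ξ_p)₊ > K}] → 0 as K → ∞
    (∀ δ > (0:ℝ), ∃ K₀ : ℝ, ∀ K ≥ K₀, ∀ p : ℕ,
      ∫ ω in {ω | K < max ((⨆ j, ε p j ω) / quantileSeq F (p * Real.log p)) 0},
          max ((⨆ j, ε p j ω) / quantileSeq F (p * Real.log p)) 0 ∂(μ p) ≤ δ) := by
  constructor
  · exact part1 F hmono h0 h1 ν hν hAGG Ω mΩ μ hprob ε hmeas hmarg
  · intro δ hδ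
    obtain ⟨p₀, t₀, hp₀, ht₀, C, hC, hbd⟩ :=
      part1 F hmono h0 h1 ν hν hAGG Ω mΩ μ hprob ε hmeas hmarg
    have hsum := sum_aux hC hν
    -- the g functions and their measurability
    set g : ∀ p : ℕ, Ω p → ℝ :=
      fun p ω => max ((⨆ j, ε p j ω) / quantileSeq F (p * Real.log p)) 0 with hgdef
    have hgmeas : ∀ p, Measurable (g p) := fun p =>
      ((Measurable.iSup (hmeas p)).div_const _).max measurable_const
    have hg0 : ∀ p ω, 0 ≤ g p ω := fun p ω => le_max_right _ _
    haveI := hprob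
    -- per-p truncation levels
    choose k hk using fun p : ℕ => helperA (μ p) (g p) (hgmeas p) (hg0 p) δ hδ
    -- uniform level N for large p
    have htail : ∀ᶠ i : ℕ in atTop,
        (∑' kk : ℕ, (((kk + i : ℕ):ℝ) + 1) * Real.exp (-C * ((kk + i : ℕ):ℝ) ^ ν)) < δ/2 := by
      have := (tendsto_sum_nat_add
        (fun n : ℕ => ((n:ℝ)+1) * Real.exp (-C * (n:ℝ)^ν))).eventually_lt_const
        (show (0:ℝ) < δ/2 by linarith)
      simpa using this
    obtain ⟨i₀, hi₀⟩ := eventually_atTop.1 htail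
    set i := max i₀ (⌈t₀⌉₊ + 1) with hidef
    set N := i + 1 with hNdef
    have hNt₀ : t₀ + 2 ≤ (N:ℝ) := by
      have h2 : (⌈t₀⌉₊ + 1 : ℕ) ≤ i := le_max_right _ _
      have h3 : ((⌈t₀⌉₊ + 1 : ℕ):ℝ) ≤ (i:ℝ) := by exact_mod_cast h2
      have h4 : t₀ ≤ (⌈t₀⌉₊ : ℝ) := Nat.le_ceil _
      have h5 : (i:ℝ) + 1 = (N:ℝ) := by exact_mod_cast rfl
      push_cast at h3 ⊢
      linarith
    have hNi : N - 1 = i := by omega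
    have hNsum : 2 * (∑' kk : ℕ, (((kk + (N-1) : ℕ):ℝ) + 1) *
        Real.exp (-C * ((kk + (N-1) : ℕ):ℝ) ^ ν)) ≤ δ := by
      rw [hNi]
      have := hi₀ i (le_max_left _ _)
      linarith
    -- combine truncation levels
    set M₁ := ⌊p₀⌋₊ with hM₁def
    have hne : (Finset.range (M₁ + 1)).Nonempty := ⟨0, Finset.mem_range.2 (Nat.succ_pos _)⟩
    refine ⟨max (N:ℝ) ((Finset.range (M₁+1)).sup' hne k), fun K hK p => ?_⟩
    by_cases hsmall : (p:ℝ) ≤ p₀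
    · have hpM : p ≤ M₁ := Nat.le_floor hsmall
      have hkp : k p ≤ (Finset.range (M₁+1)).sup' hne k :=
        Finset.le_sup' k (Finset.mem_range.2 (Nat.lt_succ_of_le hpM))
      exact hk p K (le_trans (le_trans hkp (le_max_right _ _)) hK)
    · push_neg at hsmall
      have hKN : (N:ℝ) ≤ K := le_trans (le_max_left _ _) hK
      have hB := helperB (μ p)
        (fun ω => (⨆ j, ε p j ω) / quantileSeq F (p * Real.log p)) t₀ C ν ht₀ hC hν
        (fun t ht => hbd p hsmall t ht) hsum N hNt₀
      have hIK : (∫⁻ ω in {ω | K < g p ω}, ENNReal.ofReal (g p ω) ∂(μ p))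
          ≤ ENNReal.ofReal δ := by
        calc ∫⁻ ω in {ω | K < g p ω}, ENNReal.ofReal (g p ω) ∂(μ p)
            ≤ ∫⁻ ω in {ω | (N:ℝ) < g p ω}, ENNReal.ofReal (g p ω) ∂(μ p) :=
              I_mono (μ p) (g p) hKN
          _ ≤ ENNReal.ofReal (2 * ∑' kk : ℕ, (((kk + (N-1) : ℕ):ℝ) + 1) *
                Real.exp (-C * ((kk + (N-1) : ℕ):ℝ) ^ ν)) := hB
          _ ≤ ENNReal.ofReal δ := ENNReal.ofReal_le_ofReal hNsum
      rw [show (∫ ω in {ω | K < max ((⨆ j, ε p j ω) / quantileSeq F (p * Real.log p)) 0},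
          max ((⨆ j, ε p j ω) / quantileSeq F (p * Real.log p)) 0 ∂(μ p))
          = ∫ ω in {ω | K < g p ω}, g p ω ∂(μ p) from rfl,
        conv_lemma (μ p) (g p) (hgmeas p) (hg0 p)]
      exact ENNReal.toReal_le_of_le_ofReal (le_of_lt hδ) hIK
end
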